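/- There exists a ternary operation F : S¹ × S¹ × S¹ → S¹ satisfying the symmetric majority laws — F(x,y,z) = F(x,z,y) = F(y,z,x) and F(x,x,z) = F(x,z,x) = F(z,x,x) = x for all x, y, z ∈ S¹ — whose jump χ(F) is at most 2/3 (the domain (S¹)³ carrying the product topology). Hence μ(S¹, Σ') ≤ 2/3 where Σ' is the symmetric majority theory. -/

import Mathlib

open scoped ENNReal

/-- The jump of `f` at `b`: the infimum, over open neighborhoods `U` of `b`,
of the diameter (in `[0,∞]`) of `f '' U`. -/
noncomputable def jumpAt {B A : Type*} [TopologicalSpace B] [PseudoEMetricSpace A]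
    (f : B → A) (b : B) : ℝ≥0∞ :=
  ⨅ (U : Set B) (_ : IsOpen U) (_ : b ∈ U), EMetric.diam (f '' U)

/-- The jump of `f`: the supremum over all points of the jump of `f` there. -/
noncomputable def jump {B A : Type*} [TopologicalSpace B] [PseudoEMetricSpace A]
    (f : B → A) : ℝ≥0∞ :=
  ⨆ b, jumpAt f b

noncomputable section
namespace SymMaj

abbrev S1 : Type := AddCircle (2:ℝ)

lemma exists_rep (u : S1) : ∃ r : ℝ, (r : S1) = u ∧ |r| = ‖u‖ ∧ |r| ≤ 1 := by
  induction u using QuotientAddGroup.induction_on with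
  | H x =>
    refine ⟨x - round ((2:ℝ)⁻¹ * x) * 2, ?_, ?_, ?_⟩
    · rw [QuotientAddGroup.eq_iff_sub_mem]
      have : x - round ((2:ℝ)⁻¹ * x) * 2 - x = (-round ((2:ℝ)⁻¹ * x)) • (2:ℝ) := by
        push_cast [zsmul_eq_mul]; ring
      rw [this]
      exact AddSubgroup.zsmul_mem _ (AddSubgroup.mem_zmultiples _) _
    · rw [AddCircle.norm_eq]
    · rw [← AddCircle.norm_eq]
      have := AddCircle.norm_le_half_period (p := (2:ℝ)) (x := (x : S1)) (by norm_num)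
      simpa using this

lemma norm_coe_le (x : ℝ) : ‖(x : S1)‖ ≤ |x| := by
  simpa using QuotientAddGroup.norm_mk_le_norm (S := AddSubgroup.zmultiples (2:ℝ)) (m := x)

lemma coe_two_eq_zero : ((2:ℝ) : S1) = 0 := AddCircle.coe_period 2

lemma real_key {r s N : ℝ} (hr1 : |r| ≤ 1) (hs1 : |s| ≤ 1)
    (h1 : N ≤ |r + s|) (h2 : N ≤ |r + s - 2|) (h3 : N ≤ |r + s + 2|) :
    |r| + |s| + N ≤ 2 := by
  have hr2 := abs_le.mp hr1
  have hs2 := abs_le.mp hs1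
  have e2 : |r + s - 2| = 2 - (r + s) := by
    rw [abs_of_nonpos (by linarith)]; ring
  have e3 : |r + s + 2| = r + s + 2 := abs_of_nonneg (by linarith)
  rcases le_total 0 r with h | h <;> rcases le_total 0 s with h' | h'
  · rw [abs_of_nonneg h, abs_of_nonneg h']; rw [e2] at h2; linarith
  · rw [abs_of_nonneg h, abs_of_nonpos h']
    rcases le_total 0 (r + s) with c | c
    · rw [abs_of_nonneg c] at h1; linarith
    · rw [abs_of_nonpos c] at h1; linarith
  · rw [abs_of_nonpos h, abs_of_nonneg h']
    rcases le_total 0 (r + s) with c | c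
    · rw [abs_of_nonneg c] at h1; linarith
    · rw [abs_of_nonpos c] at h1; linarith
  · rw [abs_of_nonpos h, abs_of_nonpos h']; rw [e3] at h3; linarith

lemma sum_three_le (u v : S1) : ‖u‖ + ‖v‖ + ‖u + v‖ ≤ 2 := by
  obtain ⟨r, hru, hr, hr1⟩ := exists_rep u
  obtain ⟨s, hsv, hs, hs1⟩ := exists_rep v
  have hadd : u + v = ((r + s : ℝ) : S1) := by
    rw [← hru, ← hsv, ← QuotientAddGroup.mk_add]
  have h1 : ‖u + v‖ ≤ |r + s| := hadd ▸ norm_coe_le _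
  have h2 : ‖u + v‖ ≤ |r + s - 2| := by
    have : u + v = ((r + s - 2 : ℝ) : S1) := by
      rw [hadd]
      conv_rhs => rw [QuotientAddGroup.mk_sub,
        show ((2:ℝ) : S1) = 0 from coe_two_eq_zero, sub_zero]
    exact this ▸ norm_coe_le _
  have h3 : ‖u + v‖ ≤ |r + s + 2| := by
    have : u + v = ((r + s + 2 : ℝ) : S1) := by
      rw [hadd]
      conv_rhs => rw [QuotientAddGroup.mk_add,
        show ((2:ℝ) : S1) = 0 from coe_two_eq_zero, add_zero]
    exact this ▸ norm_coe_le _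
  rw [← hr, ← hs]
  exact real_key hr1 hs1 h1 h2 h3

lemma dist_sum_le (x y z : S1) : ‖x - y‖ + ‖y - z‖ + ‖x - z‖ ≤ 2 := by
  have h := sum_three_le (x - y) (y - z)
  have e : x - y + (y - z) = x - z := by abel
  rw [e] at h; exact h

end SymMaj

namespace SymMaj
open SymMaj

/-- score of `m` relative to the triple `(x,y,z)` -/
def sc (x y z m : S1) : ℝ := ‖m - x‖ + ‖m - y‖ + ‖m - z‖

lemma sc_swap₁ (x y z m : S1) : sc x y z m = sc x z y m := by unfold sc; ring

lemma sc_cycle (x y z m : S1) : sc x y z m = sc y z x m := by unfold sc; ring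

/-- the set of minimizers of the score among the three points -/
def argset (x y z : S1) : Set S1 :=
  {m | (m = x ∨ m = y ∨ m = z) ∧ sc x y z m ≤ sc x y z x ∧
      sc x y z m ≤ sc x y z y ∧ sc x y z m ≤ sc x y z z}

lemma argset_swap₁ (x y z : S1) : argset x y z = argset x z y := by
  ext m
  simp only [argset, Set.mem_setOf_eq, ← sc_swap₁]
  tauto

lemma argset_cycle (x y z : S1) : argset x y z = argset y z x := by
  ext m
  simp only [argset, Set.mem_setOf_eq, ← sc_cycle]
  tauto

lemma argset_nonempty (x y z : S1) : (argset x y z).Nonempty := by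
  rcases le_total (sc x y z x) (sc x y z y) with h1 | h1 <;>
    rcases le_total (sc x y z x) (sc x y z z) with h2 | h2 <;>
    rcases le_total (sc x y z y) (sc x y z z) with h3 | h3
  · exact ⟨x, Or.inl rfl, le_refl _, h1, h2⟩
  · exact ⟨x, Or.inl rfl, le_refl _, h1, h2⟩
  · exact ⟨z, Or.inr (Or.inr rfl), h2, h2.trans h1, le_refl _⟩
  · exact ⟨z, Or.inr (Or.inr rfl), h2, h3, le_refl _⟩
  · exact ⟨y, Or.inr (Or.inl rfl), h1, le_refl _, h3⟩
  · exact ⟨z, Or.inr (Or.inr rfl), h3.trans h1, h3, le_refl _⟩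
  · exact ⟨y, Or.inr (Or.inl rfl), h1, le_refl _, h3⟩
  · exact ⟨z, Or.inr (Or.inr rfl), h2, h3, le_refl _⟩

open Classical in
/-- choice of an element out of a set -/
def pick (s : Set S1) : S1 := if h : s.Nonempty then h.some else 0

lemma pick_mem {s : Set S1} (h : s.Nonempty) : pick s ∈ s := by
  rw [pick, dif_pos h]
  exact h.some_mem

/-- the majority operation -/
def F (t : S1 × S1 × S1) : S1 := pick (argset t.1 t.2.1 t.2.2)

lemma F_mem (x y z : S1) : F (x, y, z) ∈ argset x y z :=
  pick_mem (argset_nonempty x y z)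

lemma sc_le_maj (a c : S1) : sc a a c a ≤ sc a a c c := by
  have e2 : sc a a c a = ‖a - c‖ := by simp [sc, sub_self]
  have e3 : sc a a c c = ‖c - a‖ + ‖c - a‖ := by simp [sc, sub_self]; try ring
  rw [e2, e3, norm_sub_rev c a]
  linarith [norm_nonneg (a - c)]

lemma argset_maj (x z : S1) : argset x x z = {x} := by
  ext m
  simp only [argset, Set.mem_setOf_eq, Set.mem_singleton_iff]
  constructor
  · rintro ⟨hm, h1, h2, h3⟩
    rcases hm with rfl | rfl | rfl
    · rfl
    · rfl
    · by_cases hxz : m = x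
      · exact hxz
      · exfalso
        have e1 : sc x x m m = ‖m - x‖ + ‖m - x‖ := by
          simp [sc, sub_self]; try ring
        have e2 : sc x x m x = ‖x - m‖ := by
          simp [sc, sub_self]
        rw [e1, e2, norm_sub_rev x m] at h1
        have : ‖m - x‖ ≤ 0 := by linarith
        have : m - x = 0 := by
          rw [← norm_le_zero_iff]; exact this
        exact hxz (sub_eq_zero.mp this)
  · rintro rfl
    exact ⟨Or.inl rfl, le_refl _, le_refl _, sc_le_maj _ _⟩

lemma F_maj (x z : S1) : F (x, x, z) = x := by
  have := F_mem x x z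
  rw [argset_maj] at this
  exact this

end SymMaj

namespace SymMaj

lemma key (x y z : S1) (η : ℝ)
    (hx : sc x y z x ≤ sc x y z z + η) (hy : sc x y z y ≤ sc x y z z + η) :
    3 * ‖x - y‖ ≤ 2 + 2 * η := by
  have h := dist_sum_le x y z
  have ex : sc x y z x = ‖x - y‖ + ‖x - z‖ := by
    unfold sc; rw [sub_self, norm_zero, norm_sub_rev x y]; ring
  have ey : sc x y z y = ‖x - y‖ + ‖y - z‖ := by
    unfold sc; rw [sub_self, norm_zero, norm_sub_rev y x]; ring
  have ez : sc x y z z = ‖x - z‖ + ‖y - z‖ := by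
    unfold sc; rw [sub_self, norm_zero, norm_sub_rev z x, norm_sub_rev z y]; ring
  rw [ex, ez] at hx
  rw [ey, ez] at hy
  linarith

lemma approx (x y z u v : S1) (η : ℝ) (hη : 0 ≤ η)
    (hu : u = x ∨ u = y ∨ u = z) (hv : v = x ∨ v = y ∨ v = z)
    (hux : sc x y z u ≤ sc x y z x + η) (huy : sc x y z u ≤ sc x y z y + η)
    (huz : sc x y z u ≤ sc x y z z + η)
    (hvx : sc x y z v ≤ sc x y z x + η) (hvy : sc x y z v ≤ sc x y z y + η)
    (hvz : sc x y z v ≤ sc x y z z + η) :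
    3 * ‖u - v‖ ≤ 2 + 2 * η := by
  rcases hu with h | h | h <;> rcases hv with h' | h' | h' <;>
    rw [h, h'] <;> rw [h] at hux huy huz <;> rw [h'] at hvx hvy hvz
  · rw [sub_self, norm_zero]; linarith
  · exact key x y z η huz hvz
  · refine key x z y η ?_ ?_
    · rw [← sc_swap₁ x y z x, ← sc_swap₁ x y z y]; exact huy
    · rw [← sc_swap₁ x y z z, ← sc_swap₁ x y z y]; exact hvy
  · rw [norm_sub_rev]; exact key x y z η hvz huz
  · rw [sub_self, norm_zero]; linarith
  · refine key y z x η ?_ ?_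
    · rw [← sc_cycle x y z y, ← sc_cycle x y z x]; exact hux
    · rw [← sc_cycle x y z z, ← sc_cycle x y z x]; exact hvx
  · rw [norm_sub_rev]
    refine key x z y η ?_ ?_
    · rw [← sc_swap₁ x y z x, ← sc_swap₁ x y z y]; exact hvy
    · rw [← sc_swap₁ x y z z, ← sc_swap₁ x y z y]; exact huy
  · rw [norm_sub_rev]
    refine key y z x η ?_ ?_
    · rw [← sc_cycle x y z y, ← sc_cycle x y z x]; exact hvx
    · rw [← sc_cycle x y z z, ← sc_cycle x y z x]; exact hux
  · rw [sub_self, norm_zero]; linarith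

lemma norm_sub_pert (a b a' b' : S1) (δ : ℝ) (h1 : ‖a - a'‖ ≤ δ) (h2 : ‖b' - b‖ ≤ δ) :
    ‖a - b‖ ≤ ‖a' - b'‖ + 2 * δ := by
  have e : a - b = a - a' + (a' - b') + (b' - b) := by abel
  calc ‖a - b‖ = ‖a - a' + (a' - b') + (b' - b)‖ := by rw [← e]
    _ ≤ ‖a - a'‖ + ‖a' - b'‖ + ‖b' - b‖ := norm_add₃_le
    _ ≤ ‖a' - b'‖ + 2 * δ := by linarith

lemma sc_pert (x y z m x' y' z' m' : S1) (δ : ℝ)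
    (hx : ‖x' - x‖ ≤ δ) (hy : ‖y' - y‖ ≤ δ) (hz : ‖z' - z‖ ≤ δ)
    (hm : ‖m - m'‖ ≤ δ) :
    sc x y z m ≤ sc x' y' z' m' + 6 * δ := by
  have h1 : ‖m - x‖ ≤ ‖m' - x'‖ + 2 * δ := norm_sub_pert m x m' x' δ hm hx
  have h2 : ‖m - y‖ ≤ ‖m' - y'‖ + 2 * δ := norm_sub_pert m y m' y' δ hm hy
  have h3 : ‖m - z‖ ≤ ‖m' - z'‖ + 2 * δ := norm_sub_pert m z m' z' δ hm hz
  unfold sc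
  linarith

lemma transfer_w (x y z x' y' z' u' : S1) (δ : ℝ)
    (hx : ‖x' - x‖ ≤ δ) (hy : ‖y' - y‖ ≤ δ) (hz : ‖z' - z‖ ≤ δ)
    (w w' : S1) (hww' : ‖w' - w‖ ≤ δ) (hmin : sc x' y' z' u' ≤ sc x' y' z' w')
    (u : S1) (huu' : ‖u' - u‖ ≤ δ) :
    sc x y z u ≤ sc x y z w + 12 * δ := by
  have s1 : sc x y z u ≤ sc x' y' z' u' + 6 * δ :=
    sc_pert x y z u x' y' z' u' δ hx hy hz (by rw [norm_sub_rev]; exact huu')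
  have s2 : sc x' y' z' w' ≤ sc x y z w + 6 * δ :=
    sc_pert x' y' z' w' x y z w δ (by rw [norm_sub_rev]; exact hx)
      (by rw [norm_sub_rev]; exact hy) (by rw [norm_sub_rev]; exact hz) hww'
  linarith

lemma transfer (x y z x' y' z' : S1) (δ : ℝ)
    (hx : ‖x' - x‖ ≤ δ) (hy : ‖y' - y‖ ≤ δ) (hz : ‖z' - z‖ ≤ δ)
    (u' : S1) (hu' : u' ∈ argset x' y' z') :
    ∃ u : S1, (u = x ∨ u = y ∨ u = z) ∧ ‖u' - u‖ ≤ δ ∧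
      sc x y z u ≤ sc x y z x + 12 * δ ∧ sc x y z u ≤ sc x y z y + 12 * δ ∧
      sc x y z u ≤ sc x y z z + 12 * δ := by
  obtain ⟨hmem, h1, h2, h3⟩ := hu'
  have hxx : ‖x' - x‖ ≤ δ := hx
  rcases hmem with h | h | h
  · have huu' : ‖u' - x‖ ≤ δ := by rw [h]; exact hx
    exact ⟨x, Or.inl rfl, huu',
      transfer_w x y z x' y' z' u' δ hx hy hz x x' hx h1 x huu',
      transfer_w x y z x' y' z' u' δ hx hy hz y y' hy h2 x huu',
      transfer_w x y z x' y' z' u' δ hx hy hz z z' hz h3 x huu'⟩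
  · have huu' : ‖u' - y‖ ≤ δ := by rw [h]; exact hy
    exact ⟨y, Or.inr (Or.inl rfl), huu',
      transfer_w x y z x' y' z' u' δ hx hy hz x x' hx h1 y huu',
      transfer_w x y z x' y' z' u' δ hx hy hz y y' hy h2 y huu',
      transfer_w x y z x' y' z' u' δ hx hy hz z z' hz h3 y huu'⟩
  · have huu' : ‖u' - z‖ ≤ δ := by rw [h]; exact hz
    exact ⟨z, Or.inr (Or.inr rfl), huu',
      transfer_w x y z x' y' z' u' δ hx hy hz x x' hx h1 z huu',
      transfer_w x y z x' y' z' u' δ hx hy hz y y' hy h2 z huu',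
      transfer_w x y z x' y' z' u' δ hx hy hz z z' hz h3 z huu'⟩

lemma F_close (x y z : S1) (δ : ℝ) (hδ : 0 ≤ δ) (x₁ y₁ z₁ x₂ y₂ z₂ : S1)
    (hx₁ : ‖x₁ - x‖ ≤ δ) (hy₁ : ‖y₁ - y‖ ≤ δ) (hz₁ : ‖z₁ - z‖ ≤ δ)
    (hx₂ : ‖x₂ - x‖ ≤ δ) (hy₂ : ‖y₂ - y‖ ≤ δ) (hz₂ : ‖z₂ - z‖ ≤ δ) :
    ‖F (x₁, y₁, z₁) - F (x₂, y₂, z₂)‖ ≤ 2/3 + 10 * δ := by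
  obtain ⟨u, hu, hud, hux, huy, huz⟩ :=
    transfer x y z x₁ y₁ z₁ δ hx₁ hy₁ hz₁ _ (F_mem x₁ y₁ z₁)
  obtain ⟨v, hv, hvd, hvx, hvy, hvz⟩ :=
    transfer x y z x₂ y₂ z₂ δ hx₂ hy₂ hz₂ _ (F_mem x₂ y₂ z₂)
  have happ := approx x y z u v (12 * δ) (by linarith) hu hv hux huy huz hvx hvy hvz
  have e : F (x₁, y₁, z₁) - F (x₂, y₂, z₂) =
      F (x₁, y₁, z₁) - u + (u - v) + (v - F (x₂, y₂, z₂)) := by abel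
  have tri : ‖F (x₁, y₁, z₁) - F (x₂, y₂, z₂)‖ ≤
      ‖F (x₁, y₁, z₁) - u‖ + ‖u - v‖ + ‖v - F (x₂, y₂, z₂)‖ := by
    rw [e]; exact norm_add₃_le
  rw [norm_sub_rev v _] at tri
  linarith

end SymMaj

namespace SymMaj

lemma F_def (t : S1 × S1 × S1) : F t = pick (argset t.1 t.2.1 t.2.2) := rfl

lemma pick_singleton (a : S1) : pick {a} = a := by
  have := pick_mem (s := {a}) ⟨a, rfl⟩
  simpa using this

end SymMaj

end

open SymMaj in
theorem exists_symm_majority_op_on_circle_jump_le :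
    ∃ F : AddCircle (2:ℝ) × AddCircle (2:ℝ) × AddCircle (2:ℝ) → AddCircle (2:ℝ),
      (∀ x y z, F (x, y, z) = F (x, z, y)) ∧
      (∀ x y z, F (x, y, z) = F (y, z, x)) ∧
      (∀ x z, F (x, x, z) = x) ∧
      (∀ x z, F (x, z, x) = x) ∧
      (∀ x z, F (z, x, x) = x) ∧
      jump F ≤ 2/3 := by
  refine ⟨SymMaj.F, ?_, ?_, ?_, ?_, ?_, ?_⟩
  · intro x y z
    rw [F_def, F_def]
    simp only
    rw [argset_swap₁]
  · intro x y z
    rw [F_def, F_def]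
    simp only
    rw [argset_cycle]
  · exact F_maj
  · intro x z
    rw [F_def]
    simp only
    rw [show argset x z x = argset x x z from (argset_swap₁ x x z).symm, argset_maj,
      pick_singleton]
  · intro x z
    rw [F_def]
    simp only
    rw [show argset z x x = argset x x z from argset_cycle z x x, argset_maj,
      pick_singleton]
  · rw [jump]
    apply iSup_le
    rintro ⟨x, y, z⟩
    apply ENNReal.le_of_forall_pos_le_add
    intro ε hε _
    set δ : ℝ := (ε : ℝ) / 10 with hδdef
    have hε' : (0:ℝ) < (ε : ℝ) := by exact_mod_cast hε
    have hδ : 0 < δ := by positivity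
    set U : Set (S1 × S1 × S1) :=
      Metric.ball x δ ×ˢ (Metric.ball y δ ×ˢ Metric.ball z δ) with hUdef
    have hU : IsOpen U := Metric.isOpen_ball.prod (Metric.isOpen_ball.prod Metric.isOpen_ball)
    have hbU : (x, y, z) ∈ U :=
      ⟨Metric.mem_ball_self hδ, Metric.mem_ball_self hδ, Metric.mem_ball_self hδ⟩
    have hdiam : EMetric.diam (SymMaj.F '' U) ≤ ENNReal.ofReal (2/3 + (ε:ℝ)) := by
      apply EMetric.diam_le
      rintro a ⟨t₁, ht₁, rfl⟩ b ⟨t₂, ht₂, rfl⟩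
      rw [edist_dist]
      apply ENNReal.ofReal_le_ofReal
      have b11 : ‖t₁.1 - x‖ ≤ δ := by
        rw [← dist_eq_norm]; exact (Metric.mem_ball.mp ht₁.1).le
      have b12 : ‖t₁.2.1 - y‖ ≤ δ := by
        rw [← dist_eq_norm]; exact (Metric.mem_ball.mp ht₁.2.1).le
      have b13 : ‖t₁.2.2 - z‖ ≤ δ := by
        rw [← dist_eq_norm]; exact (Metric.mem_ball.mp ht₁.2.2).le
      have b21 : ‖t₂.1 - x‖ ≤ δ := by
        rw [← dist_eq_norm]; exact (Metric.mem_ball.mp ht₂.1).le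
      have b22 : ‖t₂.2.1 - y‖ ≤ δ := by
        rw [← dist_eq_norm]; exact (Metric.mem_ball.mp ht₂.2.1).le
      have b23 : ‖t₂.2.2 - z‖ ≤ δ := by
        rw [← dist_eq_norm]; exact (Metric.mem_ball.mp ht₂.2.2).le
      have := F_close x y z δ hδ.le t₁.1 t₁.2.1 t₁.2.2 t₂.1 t₂.2.1 t₂.2.2
        b11 b12 b13 b21 b22 b23
      rw [dist_eq_norm]
      calc ‖SymMaj.F t₁ - SymMaj.F t₂‖ ≤ 2/3 + 10 * δ := this
        _ = 2/3 + (ε:ℝ) := by rw [hδdef]; ring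
    have hle : jumpAt SymMaj.F (x, y, z) ≤ EMetric.diam (SymMaj.F '' U) := by
      rw [jumpAt]
      exact iInf_le_of_le U (iInf_le_of_le hU (iInf_le_of_le hbU le_rfl))
    refine hle.trans (hdiam.trans ?_)
    rw [ENNReal.ofReal_add (by norm_num) hε'.le]
    gcongr
    · rw [ENNReal.ofReal_div_of_pos (by norm_num)]
      norm_num
    · rw [ENNReal.ofReal_coe_nnreal]
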